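/- Let G be a directed graph on n vertices, let β ≥ 8 be an integer, and let H ⊆ TC(G). Let q be a path in G ∪ H that is a shortest path between its endpoints and has at most ⌊β/4⌋ vertices, let q* be a subset of the vertices of q, and let u be a vertex of G. Let X be the set of pairs (s, t) ∈ TC(G) with dist_{G∪H}(s, t) ≥ β for which there exists a shortest s–t path π in G ∪ H such that u is among the first ⌊k/4⌋ vertices of π and at least one of the last ⌊k/4⌋ vertices of π belongs to q*, where k is the number of vertices of π. If X is nonempty, then there exists a vertex v ∈ q* with (u, v) ∈ TC(G) and Δ((u, v) | H) ≥ (β/8) · |X|. -/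

import Mathlib

open scoped Classical

/-- An edge of a directed graph on vertex set `Fin n`. -/
abbrev Edge (n : ℕ) := Fin n × Fin n

/-- `l` is a directed path in the graph with edge set `E`:
a sequence of distinct vertices, each consecutive pair joined by an edge. -/
def IsPathList {n : ℕ} (E : Set (Edge n)) (l : List (Fin n)) : Prop :=
  l.Nodup ∧ l.Chain' (fun a b => (a, b) ∈ E)

/-- `l` is a directed path from `u` to `v` in the graph with edge set `E`. -/
def IsPathFromTo {n : ℕ} (E : Set (Edge n)) (u v : Fin n) (l : List (Fin n)) : Prop :=
  IsPathList E l ∧ l.head? = some u ∧ l.getLast? = some v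

/-- `hdist E u v` is the minimum number of edges on a directed path from `u` to `v`
(`⊤` if no such path exists). -/
noncomputable def hdist {n : ℕ} (E : Set (Edge n)) (u v : Fin n) : ℕ∞ :=
  sInf {k : ℕ∞ | ∃ l : List (Fin n), IsPathFromTo E u v l ∧ (l.length : ℕ∞) = k + 1}

/-- `(u, v)` is in the transitive closure: `u ≠ v` and `v` is reachable from `u`. -/
def TCrel {n : ℕ} (E : Set (Edge n)) (u v : Fin n) : Prop :=
  u ≠ v ∧ ∃ l : List (Fin n), IsPathFromTo E u v l

/-- The transitive closure of the graph with edge set `E`, as a set of pairs. -/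
def TCset {n : ℕ} (E : Set (Edge n)) : Set (Edge n) := {p | TCrel E p.1 p.2}

/-- `H` is a shortcut set with hopbound `β` for the graph with edge set `E`. -/
def IsShortcutSet {n : ℕ} (E H : Set (Edge n)) (β : ℕ) : Prop :=
  H ⊆ TCset E ∧ ∀ p ∈ TCset E, hdist (E ∪ H) p.1 p.2 ≤ (β : ℕ∞)

/-- The potential `φ(H)`: the sum of `dist_{G∪H}(s,t)` over all pairs `(s,t)` in the
transitive closure of `G` with `dist_{G∪H}(s,t) ≥ β`. -/
noncomputable def potential {n : ℕ} (E H : Set (Edge n)) (β : ℕ) : ℕ :=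
  ∑ p : Edge n,
    if TCrel E p.1 p.2 ∧ (β : ℕ∞) ≤ hdist (E ∪ H) p.1 p.2
    then (hdist (E ∪ H) p.1 p.2).toNat else 0

/-- `Δ((u,v) | H) = φ(H) - φ(H ∪ {(u,v)})`. -/
noncomputable def pdelta {n : ℕ} (E H : Set (Edge n)) (β : ℕ) (e : Edge n) : ℕ :=
  potential E H β - potential E (H ∪ {e}) β
section Helpers

variable {n : ℕ}

/-- A walk: a chain of edges (vertices may repeat) from `u` to `v`. -/
def IsWalk (E : Set (Edge n)) (u v : Fin n) (l : List (Fin n)) : Prop :=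
  l.Chain' (fun a b => (a, b) ∈ E) ∧ l.head? = some u ∧ l.getLast? = some v

lemma IsWalk.ne_nil {E : Set (Edge n)} {u v : Fin n} {l : List (Fin n)}
    (h : IsWalk E u v l) : l ≠ [] := by
  rintro rfl; simp [IsWalk] at h

lemma IsWalk.mono {E E' : Set (Edge n)} (hEE : E ⊆ E') {u v : Fin n} {l : List (Fin n)}
    (h : IsWalk E u v l) : IsWalk E' u v l :=
  ⟨h.1.imp (fun _ _ hx => hEE hx), h.2.1, h.2.2⟩

lemma IsPathFromTo.isWalk {E : Set (Edge n)} {u v : Fin n} {l : List (Fin n)}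
    (h : IsPathFromTo E u v l) : IsWalk E u v l :=
  ⟨h.1.2, h.2.1, h.2.2⟩

lemma isWalk_pair {E : Set (Edge n)} {u v : Fin n} (h : (u, v) ∈ E) :
    IsWalk E u v [u, v] :=
  ⟨List.isChain_pair.2 h, rfl, rfl⟩

lemma isWalk_singleton {E : Set (Edge n)} (u : Fin n) : IsWalk E u u [u] :=
  ⟨List.isChain_singleton u, rfl, rfl⟩

lemma chain'_getElem_edge {α : Type*} {R : α → α → Prop} {l : List α} (h : l.Chain' R)
    {i j : ℕ} (hj : j < l.length) (hij : i + 1 = j) :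
    R (l[i]'(by omega)) (l[j]'hj) := by
  subst hij
  have := List.isChain_iff_getElem.1 h i (by omega)
  simpa using this

lemma exists_path_of_walk {E : Set (Edge n)} :
    ∀ (m : ℕ) (l : List (Fin n)) (u v : Fin n), l.length ≤ m → IsWalk E u v l →
      ∃ l', IsPathFromTo E u v l' ∧ l'.length ≤ l.length := by
  intro m
  induction m with
  | zero =>
    intro l u v hl hw
    cases l with
    | nil => exact absurd rfl hw.ne_nil
    | cons a l => simp at hl
  | succ m ih =>
    intro l u v hl hw
    by_cases hnd : l.Nodup
    · exact ⟨l, ⟨⟨hnd, hw.1⟩, hw.2.1, hw.2.2⟩, le_rfl⟩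
    · have hdup : ∃ (i j : ℕ) (_ : i < l.length) (hj : j < l.length),
          i < j ∧ l[i]'(by omega) = l[j]'hj := by
        by_contra hcon
        push_neg at hcon
        apply hnd
        rw [List.nodup_iff_injective_getElem]
        rintro ⟨i, hi⟩ ⟨j, hj⟩ h
        rcases lt_trichotomy i j with h' | h' | h'
        · exact absurd h (hcon i j hi hj h')
        · exact Fin.ext h'
        · exact absurd h.symm (hcon j i hj hi h')
      obtain ⟨i, j, hi, hj, hij, heq⟩ := hdup
      set l₂ := l.take i ++ l.drop j with hl₂
      have hlen₂ : l₂.length = i + (l.length - j) := by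
        simp [hl₂, List.length_take, List.length_drop, min_eq_left hi.le]
      have hwalk₂ : IsWalk E u v l₂ := by
        refine ⟨?_, ?_, ?_⟩
        · show List.IsChain _ (l.take i ++ l.drop j); rw [List.isChain_append]
          refine ⟨hw.1.take i, hw.1.drop j, ?_⟩
          intro x hx y hy
          have hi0 : i ≠ 0 := by
            rintro rfl
            simp at hx
          have htl : (l.take i).getLast? = l[i-1]? := by
            rw [List.getLast?_eq_getElem?, List.length_take, min_eq_left hi.le,
              List.getElem?_take_of_lt (by omega)]
          have hx' : x = l[i-1]'(by omega) := by
            rw [htl, List.getElem?_eq_getElem (by omega : i - 1 < l.length)] at hx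
            exact (Option.some_inj.1 hx).symm
          have hdh : (l.drop j).head? = l[j]? := by
            rw [List.head?_eq_getElem?, List.getElem?_drop, Nat.add_zero]
          have hy' : y = l[j]'hj := by
            rw [hdh, List.getElem?_eq_getElem hj] at hy
            exact (Option.some_inj.1 hy).symm
          rw [hx', hy', ← heq]
          exact chain'_getElem_edge hw.1 hi (by omega)
        · rcases Nat.eq_zero_or_pos i with h0 | h0
          · subst h0
            simp only [hl₂, List.take_zero, List.nil_append]
            have hdh : (l.drop j).head? = l[j]? := by
              rw [List.head?_eq_getElem?, List.getElem?_drop, Nat.add_zero]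
            rw [hdh, List.getElem?_eq_getElem hj, ← heq]
            have := hw.2.1
            rw [List.head?_eq_getElem?, List.getElem?_eq_getElem (by omega : 0 < l.length)] at this
            exact this
          · have : (l.take i).head? = some u := by
              rw [List.head?_eq_getElem?, List.getElem?_take_of_lt h0, ← List.head?_eq_getElem?]
              exact hw.2.1
            rw [hl₂, List.head?_append, this]
            rfl
        · have hdrop_ne : l.drop j ≠ [] := by
            simp [List.drop_eq_nil_iff]
            omega
          have hdl : (l.drop j).getLast? = l.getLast? := by
            rw [List.getLast?_eq_getElem?, List.getLast?_eq_getElem?, List.length_drop,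
              List.getElem?_drop]
            congr 1
            omega
          rw [hl₂, List.getLast?_append, hdl, hw.2.2]
          rfl
      have : l₂.length ≤ m := by
        have : l₂.length < l.length := by omega
        omega
      obtain ⟨l', hl', hlen'⟩ := ih l₂ u v this hwalk₂
      exact ⟨l', hl', by omega⟩

end Helpers

section Helpers2

variable {n : ℕ}

lemma IsWalk.trans {E : Set (Edge n)} {u v w : Fin n} {l₁ l₂ : List (Fin n)}
    (h₁ : IsWalk E u v l₁) (h₂ : IsWalk E v w l₂) : IsWalk E u w (l₁ ++ l₂.tail) := by
  obtain ⟨c₁, hh₁, hg₁⟩ := h₁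
  obtain ⟨c₂, hh₂, hg₂⟩ := h₂
  have hl₁ne : l₁ ≠ [] := by rintro rfl; simp at hh₁
  cases l₂ with
  | nil => simp at hh₂
  | cons a rest =>
    have ha : a = v := by simpa using hh₂
    cases rest with
    | nil =>
      have haw : a = w := by simpa using hg₂
      simp only [List.tail_cons, List.append_nil]
      exact ⟨c₁, hh₁, by rw [hg₁, ← ha, haw]⟩
    | cons b rest' =>
      refine ⟨?_, ?_, ?_⟩
      · rw [List.tail_cons]; show List.IsChain _ _; rw [List.isChain_append]
        refine ⟨c₁, (List.isChain_cons_cons.1 c₂).2, ?_⟩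
        intro x hx y hy
        have hx' : v = x := by rw [hg₁] at hx; simpa using hx
        have hy' : b = y := by simpa using hy
        rw [← hx', ← hy', ← ha]
        exact (List.isChain_cons_cons.1 c₂).1
      · rw [List.head?_append, hh₁]; rfl
      · rw [List.tail_cons, List.getLast?_append]
        rw [List.getLast?_cons_cons] at hg₂
        rw [hg₂]
        rfl

lemma exists_walk_reduce {E H : Set (Edge n)} (hH : H ⊆ TCset E) :
    ∀ (l : List (Fin n)) (u v : Fin n), IsWalk (E ∪ H) u v l → ∃ l', IsWalk E u v l' := by
  intro l
  induction l with
  | nil => intro u v h; exact absurd rfl h.ne_nil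
  | cons a rest ih =>
    intro u v h
    have hau : a = u := by simpa using h.2.1
    subst hau
    cases rest with
    | nil =>
      have hav : a = v := by simpa using h.2.2
      subst hav
      exact ⟨[a], isWalk_singleton a⟩
    | cons b rest' =>
      have hedge : (a, b) ∈ E ∪ H := (List.isChain_cons_cons.1 h.1).1
      have hw2 : IsWalk (E ∪ H) b v (b :: rest') := by
        refine ⟨(List.isChain_cons_cons.1 h.1).2, rfl, ?_⟩
        rw [← List.getLast?_cons_cons (a := a)]
        exact h.2.2
      obtain ⟨l₂, hl₂⟩ := ih b v hw2
      obtain ⟨l₁, hl₁⟩ : ∃ l₁, IsWalk E a b l₁ := by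
        rcases hedge with he | hh
        · exact ⟨[a, b], isWalk_pair he⟩
        · obtain ⟨-, lp, hlp⟩ := hH hh
          exact ⟨lp, hlp.isWalk⟩
      exact ⟨l₁ ++ l₂.tail, hl₁.trans hl₂⟩

lemma walk_segment {E : Set (Edge n)} {l : List (Fin n)} {i j : ℕ} {a b : Fin n}
    (hc : l.Chain' (fun x y => (x, y) ∈ E)) (hij : i ≤ j)
    (ha : l[i]? = some a) (hb : l[j]? = some b) :
    IsWalk E a b ((l.drop i).take (j - i + 1)) ∧
      ((l.drop i).take (j - i + 1)).length = j - i + 1 := by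
  have hj' : j < l.length := (List.getElem?_eq_some_iff.1 hb).1
  have hlen : ((l.drop i).take (j - i + 1)).length = j - i + 1 := by
    rw [List.length_take, List.length_drop]
    omega
  refine ⟨⟨(hc.drop i).take _, ?_, ?_⟩, hlen⟩
  · rw [List.head?_eq_getElem?, List.getElem?_take_of_lt (by omega), List.getElem?_drop,
      Nat.add_zero]
    exact ha
  · rw [List.getLast?_eq_getElem?, hlen, Nat.add_sub_cancel,
      List.getElem?_take_of_lt (by omega), List.getElem?_drop]
    rw [show i + (j - i) = j by omega]
    exact hb

lemma IsPathFromTo.mono {E E' : Set (Edge n)} (hEE : E ⊆ E') {u v : Fin n} {l : List (Fin n)}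
    (h : IsPathFromTo E u v l) : IsPathFromTo E' u v l :=
  ⟨⟨h.1.1, h.1.2.imp (fun _ _ hx => hEE hx)⟩, h.2.1, h.2.2⟩

lemma hdist_le_of_walk {E : Set (Edge n)} {u v : Fin n} {l : List (Fin n)}
    (h : IsWalk E u v l) : hdist E u v + 1 ≤ (l.length : ℕ∞) := by
  obtain ⟨l', hp, hlen⟩ := exists_path_of_walk l.length l u v le_rfl h
  have h1 : 1 ≤ l'.length := by
    have := hp.2.1
    cases l' with
    | nil => simp at this
    | cons x xs => simp
  have hmem : ((l'.length - 1 : ℕ) : ℕ∞) ∈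
      {k : ℕ∞ | ∃ l : List (Fin n), IsPathFromTo E u v l ∧ (l.length : ℕ∞) = k + 1} := by
    refine ⟨l', hp, ?_⟩
    norm_cast
    omega
  calc hdist E u v + 1 ≤ ((l'.length - 1 : ℕ) : ℕ∞) + 1 :=
        add_le_add_left (sInf_le hmem) 1
    _ = (l'.length : ℕ∞) := by norm_cast; omega
    _ ≤ (l.length : ℕ∞) := Nat.cast_le.2 hlen

lemma hdist_shortest {E : Set (Edge n)} {u v : Fin n} {π : List (Fin n)}
    (hp : IsPathFromTo E u v π)
    (hmin : ∀ l, IsPathFromTo E u v l → π.length ≤ l.length) :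
    hdist E u v + 1 = (π.length : ℕ∞) := by
  refine le_antisymm (hdist_le_of_walk hp.isWalk) ?_
  have h1 : 1 ≤ π.length := by
    have := hp.2.1
    cases π with
    | nil => simp at this
    | cons x xs => simp
  have hlb : ((π.length - 1 : ℕ) : ℕ∞) ≤ hdist E u v := by
    apply le_sInf
    rintro k ⟨l, hl, hlen⟩
    induction k using ENat.recTopCoe with
    | top => exact le_top
    | coe m =>
      have hml : l.length = m + 1 := by exact_mod_cast hlen
      have := hmin l hl
      exact_mod_cast (by omega : π.length - 1 ≤ m)
  calc (π.length : ℕ∞) = ((π.length - 1 : ℕ) : ℕ∞) + 1 := by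
        norm_cast; omega
    _ ≤ hdist E u v + 1 := add_le_add_left hlb 1

lemma hdist_mono {E E' : Set (Edge n)} (hEE : E ⊆ E') (u v : Fin n) :
    hdist E' u v ≤ hdist E u v := by
  apply sInf_le_sInf
  rintro k ⟨l, hl, hlen⟩
  exact ⟨l, hl.mono hEE, hlen⟩

lemma hdist_ne_top {E : Set (Edge n)} {u v : Fin n} {l : List (Fin n)}
    (h : IsWalk E u v l) : hdist E u v ≠ ⊤ := by
  have h2 := hdist_le_of_walk h
  intro htop
  rw [htop] at h2
  simp at h2

end Helpers2


/-- **counting big triangles.** Let `G` be a directed graph on `n`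
vertices, `β ≥ 8` an integer, `H ⊆ TC(G)`, `q` a shortest path between its endpoints in
`G ∪ H` with at most `⌊β/4⌋` vertices, `q*` a subset of the vertices of `q`, and `u` a
vertex. Let `X` be the set of pairs `(s,t) ∈ TC(G)` with `dist_{G∪H}(s,t) ≥ β` admitting a
shortest `s`–`t` path `π` in `G ∪ H` such that `u` is among the first `⌊k/4⌋` vertices of
`π` and one of the last `⌊k/4⌋` vertices of `π` lies in `q*` (`k = |π|`). If `X ≠ ∅`,
then some `v ∈ q*` satisfies `(u,v) ∈ TC(G)` and `Δ((u,v) | H) ≥ (β/8)·|X|`. -/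
theorem counting_big_triangles :
    ∀ (n : ℕ) (E : Set (Edge n)) (β : ℕ), 8 ≤ β →
      ∀ H : Set (Edge n), H ⊆ TCset E →
        ∀ (q : List (Fin n)) (s t : Fin n),
          IsPathFromTo (E ∪ H) s t q →
          (∀ l : List (Fin n), IsPathFromTo (E ∪ H) s t l → q.length ≤ l.length) →
          q.length ≤ β / 4 →
          ∀ qstar : Set (Fin n), qstar ⊆ {x : Fin n | x ∈ q} →
            ∀ u : Fin n, ∀ X : Set (Edge n),
              X = {p : Edge n | p ∈ TCset E ∧ (β : ℕ∞) ≤ hdist (E ∪ H) p.1 p.2 ∧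
                ∃ π : List (Fin n), IsPathFromTo (E ∪ H) p.1 p.2 π ∧
                  (∀ l : List (Fin n), IsPathFromTo (E ∪ H) p.1 p.2 l →
                    π.length ≤ l.length) ∧
                  (∃ i : ℕ, i < π.length / 4 ∧ π[i]? = some u) ∧
                  (∃ (j : ℕ) (x : Fin n), π.length - π.length / 4 ≤ j ∧
                    π[j]? = some x ∧ x ∈ qstar)} →
              X.Nonempty →
              ∃ v ∈ qstar, TCrel E u v ∧
                (pdelta E H β (u, v) : ℝ) ≥ ((β : ℝ) / 8) * (X.ncard : ℝ) := by
  intro n E β hβ H hH q s t hq hqmin hqlen qstar hqstar u X hX hXne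
  classical
  have hXmem : ∀ p : Edge n, p ∈ X ↔
      (p ∈ TCset E ∧ (β : ℕ∞) ≤ hdist (E ∪ H) p.1 p.2 ∧
        ∃ π : List (Fin n), IsPathFromTo (E ∪ H) p.1 p.2 π ∧
          (∀ l : List (Fin n), IsPathFromTo (E ∪ H) p.1 p.2 l → π.length ≤ l.length) ∧
          (∃ i : ℕ, i < π.length / 4 ∧ π[i]? = some u) ∧
          (∃ (j : ℕ) (x : Fin n), π.length - π.length / 4 ≤ j ∧
            π[j]? = some x ∧ x ∈ qstar)) := by
    intro p; rw [hX]; exact Iff.rfl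
  set W : Set (Fin n) := {x | ∃ p ∈ X, ∃ π : List (Fin n),
      IsPathFromTo (E ∪ H) p.1 p.2 π ∧
      (∀ l : List (Fin n), IsPathFromTo (E ∪ H) p.1 p.2 l → π.length ≤ l.length) ∧
      (∃ i : ℕ, i < π.length / 4 ∧ π[i]? = some u) ∧
      (∃ j : ℕ, π.length - π.length / 4 ≤ j ∧ π[j]? = some x ∧ x ∈ qstar)} with hW
  have hWq : W ⊆ qstar := by
    rintro x ⟨p, hp, π, hπ, hmin, hu, j, hj, hjx, hxq⟩
    exact hxq
  have hWne : W.Nonempty := by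
    obtain ⟨p, hp⟩ := hXne
    obtain ⟨hTC, hb, π, hπ, hmin, hu, j, x, hj, hjx, hxq⟩ := (hXmem p).1 hp
    exact ⟨x, p, hp, π, hπ, hmin, hu, j, hj, hjx, hxq⟩
  set Jset : Set ℕ := (fun x => q.idxOf x) '' W with hJ
  have hJne : Jset.Nonempty := hWne.image _
  obtain ⟨v, hvW, hva⟩ : ∃ v ∈ W, q.idxOf v = sInf Jset := Nat.sInf_mem hJne
  set a := sInf Jset with haad
  have hmin' : ∀ x ∈ W, a ≤ q.idxOf x := fun x hx => Nat.sInf_le ⟨x, hx, rfl⟩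
  have hvqs : v ∈ qstar := hWq hvW
  have hvq : v ∈ q := hqstar hvqs
  have haq : a < q.length := by rw [← hva]; exact List.idxOf_lt_length_iff.2 hvq
  have hqa : q[a]? = some v := by
    rw [← hva, List.getElem?_eq_getElem (hva ▸ haq)]
    exact congrArg some (List.getElem_idxOf _)
  have hTCuv : TCrel E u v := by
    obtain ⟨p₀, hp₀, π₀, hπ₀, hmin₀, ⟨i₀, hi₀, hiu₀⟩, j₀, hj₀, hjv₀, _⟩ := hvW
    obtain ⟨hTC₀, hb₀, -⟩ := (hXmem p₀).1 hp₀
    have hk₀ := hdist_shortest hπ₀ hmin₀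
    have hkβ : β + 1 ≤ π₀.length := by
      have h2 : (β : ℕ∞) + 1 ≤ (π₀.length : ℕ∞) := by
        rw [← hk₀]; exact add_le_add_left hb₀ 1
      exact_mod_cast h2
    have hj₀' : j₀ < π₀.length := (List.getElem?_eq_some_iff.1 hjv₀).1
    have hij : i₀ < j₀ := by omega
    have hne : u ≠ v := by
      intro huv
      have hi₀' : i₀ < π₀.length := by omega
      have h1 : π₀[i₀]'hi₀' = u := by
        rw [List.getElem?_eq_getElem hi₀'] at hiu₀; exact Option.some_inj.1 hiu₀
      have h2 : π₀[j₀]'hj₀' = v := by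
        rw [List.getElem?_eq_getElem hj₀'] at hjv₀; exact Option.some_inj.1 hjv₀
      have h3 : i₀ = j₀ :=
        (List.Nodup.getElem_inj_iff hπ₀.1.1).1 (h1.trans (huv.trans h2.symm))
      omega
    have hws := (walk_segment hπ₀.1.2 hij.le hiu₀ hjv₀).1
    obtain ⟨w', hw'⟩ := exists_walk_reduce hH _ u v hws
    obtain ⟨l', hl', -⟩ := exists_path_of_walk w'.length w' u v le_rfl hw'
    exact ⟨hne, l', hl'⟩
  refine ⟨v, hvqs, hTCuv, ?_⟩
  set G2 : Set (Edge n) := (E ∪ H) ∪ {(u, v)} with hG2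
  have hEHG2 : E ∪ (H ∪ {(u, v)}) = G2 := by rw [hG2, Set.union_assoc]
  set F : Edge n → ℕ := fun p =>
    if TCrel E p.1 p.2 ∧ (β : ℕ∞) ≤ hdist (E ∪ H) p.1 p.2
    then (hdist (E ∪ H) p.1 p.2).toNat else 0 with hF
  set Gf : Edge n → ℕ := fun p =>
    if TCrel E p.1 p.2 ∧ (β : ℕ∞) ≤ hdist G2 p.1 p.2
    then (hdist G2 p.1 p.2).toNat else 0 with hGf
  have hpot1 : potential E H β = ∑ p : Edge n, F p := rfl
  have hpot2 : potential E (H ∪ {(u, v)}) β = ∑ p : Edge n, Gf p := by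
    unfold potential
    rw [hEHG2]
  have hsub : E ∪ H ⊆ G2 := by rw [hG2]; exact Set.subset_union_left
  have hGF : ∀ p : Edge n, Gf p ≤ F p := by
    intro p
    rw [hF, hGf]
    dsimp only
    by_cases hTC : TCrel E p.1 p.2
    · have hfin : hdist (E ∪ H) p.1 p.2 ≠ ⊤ := by
        obtain ⟨-, lp, hlp⟩ := hTC
        exact hdist_ne_top (hlp.mono Set.subset_union_left).isWalk
      by_cases h2 : (β : ℕ∞) ≤ hdist G2 p.1 p.2
      · rw [if_pos ⟨hTC, h2⟩, if_pos ⟨hTC, le_trans h2 (hdist_mono hsub _ _)⟩]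
        exact ENat.toNat_le_toNat (hdist_mono hsub _ _) hfin
      · rw [if_neg (fun hh => h2 hh.2)]
        exact Nat.zero_le _
    · rw [if_neg (fun hh => hTC hh.1), if_neg (fun hh => hTC hh.1)]
  have hkey : ∀ p ∈ X, β ≤ 8 * (F p - Gf p) := by
    intro p hp
    obtain ⟨hTC, hb, π, hπ, hπmin, ⟨i, hik, hiu⟩, j, x, hjk, hjx, hxq⟩ := (hXmem p).1 hp
    have hk := hdist_shortest hπ hπmin
    have hfin : hdist (E ∪ H) p.1 p.2 ≠ ⊤ := hdist_ne_top hπ.isWalk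
    have hkβ : β + 1 ≤ π.length := by
      have h2 : (β : ℕ∞) + 1 ≤ (π.length : ℕ∞) := by
        rw [← hk]; exact add_le_add_left hb 1
      exact_mod_cast h2
    have hF_p : F p = π.length - 1 := by
      rw [hF]
      dsimp only
      rw [if_pos ⟨hTC, hb⟩]
      have hc : ((hdist (E ∪ H) p.1 p.2).toNat : ℕ∞) = hdist (E ∪ H) p.1 p.2 :=
        ENat.coe_toNat hfin
      have h3 : (hdist (E ∪ H) p.1 p.2).toNat + 1 = π.length := by
        have h2 : ((hdist (E ∪ H) p.1 p.2).toNat : ℕ∞) + 1 = (π.length : ℕ∞) := by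
          rw [hc, hk]
        exact_mod_cast h2
      omega
    have hj' : j < π.length := (List.getElem?_eq_some_iff.1 hjx).1
    have hxW : x ∈ W := ⟨p, hp, π, hπ, hπmin, ⟨i, hik, hiu⟩, j, hjk, hjx, hxq⟩
    have hab : a ≤ q.idxOf x := hmin' x hxW
    have hbq : q.idxOf x < q.length := List.idxOf_lt_length_iff.2 (hqstar hxq)
    have hqb : q[q.idxOf x]? = some x := by
      rw [List.getElem?_eq_getElem hbq]
      exact congrArg some (List.getElem_idxOf _)
    have hs0 : π[0]? = some p.1 := by rw [← List.head?_eq_getElem?]; exact hπ.2.1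
    have ht0 : π[π.length - 1]? = some p.2 := by
      rw [← List.getLast?_eq_getElem?]; exact hπ.2.2
    obtain ⟨hw1, hl1⟩ := walk_segment hπ.1.2 (Nat.zero_le i) hs0 hiu
    obtain ⟨hw2, hl2⟩ := walk_segment hq.1.2 hab hqa hqb
    obtain ⟨hw3, hl3⟩ := walk_segment hπ.1.2 (by omega : j ≤ π.length - 1) hjx ht0
    set w1 := (π.drop 0).take (i - 0 + 1)
    set w2 := (q.drop a).take (q.idxOf x - a + 1)
    set w3 := (π.drop j).take (π.length - 1 - j + 1)
    have huvE : (u, v) ∈ G2 := by rw [hG2]; exact Set.mem_union_right _ rfl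
    have hwalk : IsWalk G2 p.1 p.2 (((w1 ++ [u, v].tail) ++ w2.tail) ++ w3.tail) :=
      (((hw1.mono hsub).trans (isWalk_pair huvE)).trans (hw2.mono hsub)).trans
        (hw3.mono hsub)
    have hd' := hdist_le_of_walk hwalk
    have hfin' : hdist G2 p.1 p.2 ≠ ⊤ := by
      intro htop
      exact hfin (top_le_iff.1 (htop ▸ hdist_mono hsub p.1 p.2))
    have hmc : (((hdist G2 p.1 p.2).toNat : ℕ)  : ℕ∞) = hdist G2 p.1 p.2 :=
      ENat.coe_toNat hfin'
    have hwl : (((w1 ++ [u, v].tail) ++ w2.tail) ++ w3.tail).length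
        = (i + 1) + 1 + (q.idxOf x - a) + (π.length - 1 - j) := by
      simp only [List.length_append, List.length_tail, hl1, hl2, hl3, List.tail_cons,
        List.length_cons, List.length_nil]
      omega
    have hmle : (hdist G2 p.1 p.2).toNat + 1
        ≤ (i + 1) + 1 + (q.idxOf x - a) + (π.length - 1 - j) := by
      have h2 : (((hdist G2 p.1 p.2).toNat : ℕ) : ℕ∞) + 1
          ≤ (((i + 1) + 1 + (q.idxOf x - a) + (π.length - 1 - j) : ℕ) : ℕ∞) := by
        rw [hmc, ← hwl]
        exact hd'
      exact_mod_cast h2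
    have hGp : Gf p ≤ (hdist G2 p.1 p.2).toNat := by
      rw [hGf]
      dsimp only
      split
      · exact le_rfl
      · exact Nat.zero_le _
    omega
  have h1 : ∑ p : Edge n, Gf p + ∑ p : Edge n, (F p - Gf p) = ∑ p : Edge n, F p := by
    rw [← Finset.sum_add_distrib]
    exact Finset.sum_congr rfl fun p _ => by have := hGF p; omega
  have h2 : pdelta E H β (u, v) = ∑ p : Edge n, (F p - Gf p) := by
    unfold pdelta
    rw [hpot1, hpot2]
    omega
  have h3 : ∑ p ∈ X.toFinset, (F p - Gf p) ≤ ∑ p : Edge n, (F p - Gf p) :=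
    Finset.sum_le_sum_of_subset (Finset.subset_univ _)
  have h4 : β * X.ncard ≤ 8 * ∑ p ∈ X.toFinset, (F p - Gf p) := by
    rw [Finset.mul_sum]
    calc β * X.ncard = ∑ _p ∈ X.toFinset, β := by
          rw [Finset.sum_const, smul_eq_mul, Set.ncard_eq_toFinset_card', mul_comm]
      _ ≤ ∑ p ∈ X.toFinset, 8 * (F p - Gf p) :=
          Finset.sum_le_sum fun p hp => hkey p (Set.mem_toFinset.1 hp)
  have h5 : β * X.ncard ≤ 8 * pdelta E H β (u, v) := by
    rw [h2]
    omega
  rw [ge_iff_le, div_mul_eq_mul_div, div_le_iff₀ (by norm_num : (0 : ℝ) < 8)]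
  have h6 : ((β * X.ncard : ℕ) : ℝ) ≤ ((8 * pdelta E H β (u, v) : ℕ) : ℝ) :=
    Nat.cast_le.2 h5
  push_cast at h6
  linarith
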